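/- arXiv:2505.04857 — 2 statements merged into one kernel-verified Lean document; each statement's English description precedes it below -/
import Mathlib

section
/- Elliott's approximate intertwining (one-sided consequence): let A and B be separable C*-algebras and φ : A → B, ψ : B → A *-homomorphisms such that ψ ∘ φ is approximately unitarily equivalent to id_A and φ ∘ ψ is approximately unitarily equivalent to id_B (via unitaries in the unitizations). Then A and B are isomorphic as C*-algebras; moreover φ is approximately unitarily equivalent to an isomorphism. -/
open Filter Topology

/-- Approximate unitary equivalence of maps `A → B`, witnessed by a sequence of unitaries in
the minimal unitization `B† = Unitization ℂ B` of `B`. -/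
def ApproxUnitarilyEquiv {A B : Type*} [NonUnitalCStarAlgebra A] [NonUnitalCStarAlgebra B]
    (φ ψ : A → B) : Prop :=
  ∃ u : ℕ → unitary (Unitization ℂ B), ∀ a : A,
    Tendsto (fun n => ‖(u n : Unitization ℂ B) * (φ a : Unitization ℂ B) * star (u n : Unitization ℂ B)
      - (ψ a : Unitization ℂ B)‖) atTop (𝓝 0)

namespace ElliottAux

variable {A B : Type*} [NonUnitalCStarAlgebra A] [NonUnitalCStarAlgebra B]

/-- Conjugation of `B` by a unitary of its unitization, as a bare function. -/
noncomputable def conj0 (u : unitary (Unitization ℂ B)) (b : B) : B :=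
  ((u : Unitization ℂ B) * (b : Unitization ℂ B) * star (u : Unitization ℂ B)).snd

lemma inr_conj0 (u : unitary (Unitization ℂ B)) (b : B) :
    (↑(conj0 u b) : Unitization ℂ B)
      = (u : Unitization ℂ B) * (b : Unitization ℂ B) * star (u : Unitization ℂ B) := by
  conv_rhs => rw [← Unitization.inl_fst_add_inr_snd_eq
    ((u : Unitization ℂ B) * (b : Unitization ℂ B) * star (u : Unitization ℂ B))]
  simp [conj0]

lemma conj0_smul (u : unitary (Unitization ℂ B)) (c : ℂ) (b : B) :
    conj0 u (c • b) = c • conj0 u b := by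
  apply Unitization.inr_injective (R := ℂ)
  rw [inr_conj0, Unitization.inr_smul, Unitization.inr_smul, inr_conj0]
  simp [mul_smul_comm, smul_mul_assoc]

lemma conj0_zero (u : unitary (Unitization ℂ B)) : conj0 u 0 = 0 := by
  apply Unitization.inr_injective (R := ℂ)
  rw [inr_conj0]
  simp

lemma conj0_add (u : unitary (Unitization ℂ B)) (b c : B) :
    conj0 u (b + c) = conj0 u b + conj0 u c := by
  apply Unitization.inr_injective (R := ℂ)
  rw [Unitization.inr_add, inr_conj0, inr_conj0, inr_conj0, Unitization.inr_add]
  simp [mul_add, add_mul]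

lemma conj0_mul (u : unitary (Unitization ℂ B)) (b c : B) :
    conj0 u (b * c) = conj0 u b * conj0 u c := by
  apply Unitization.inr_injective (R := ℂ)
  rw [Unitization.inr_mul, inr_conj0, inr_conj0, inr_conj0, Unitization.inr_mul]
  have h1 : ∀ x : Unitization ℂ B,
      star (u : Unitization ℂ B) * ((u : Unitization ℂ B) * x) = x := by
    intro x
    rw [← mul_assoc, Unitary.coe_star_mul_self, one_mul]
  simp only [mul_assoc, h1]

lemma conj0_star (u : unitary (Unitization ℂ B)) (b : B) :
    conj0 u (star b) = star (conj0 u b) := by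
  apply Unitization.inr_injective (R := ℂ)
  rw [Unitization.inr_star, inr_conj0, inr_conj0, Unitization.inr_star]
  simp [star_mul, mul_assoc]

/-- Conjugation by a unitary of the unitization, as a star homomorphism `B →⋆ₙₐ[ℂ] B`. -/
noncomputable def adU (u : unitary (Unitization ℂ B)) : B →⋆ₙₐ[ℂ] B where
  toFun := conj0 u
  map_smul' := conj0_smul u
  map_zero' := conj0_zero u
  map_add' := conj0_add u
  map_mul' := conj0_mul u
  map_star' := conj0_star u

lemma inr_adU (u : unitary (Unitization ℂ B)) (b : B) :
    (↑(adU u b) : Unitization ℂ B)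
      = (u : Unitization ℂ B) * (b : Unitization ℂ B) * star (u : Unitization ℂ B) :=
  inr_conj0 u b


/-- The unitary of `Unitization ℂ B` induced by a unitary of `Unitization ℂ A` via the
functorial map on unitizations. -/
noncomputable def uStarMap (f : A →⋆ₙₐ[ℂ] B) (z : unitary (Unitization ℂ A)) :
    unitary (Unitization ℂ B) :=
  ⟨Unitization.starMap f (z : Unitization ℂ A), Unitary.map_mem (Unitization.starMap f) z.2⟩

lemma coe_uStarMap (f : A →⋆ₙₐ[ℂ] B) (z : unitary (Unitization ℂ A)) :
    (uStarMap f z : Unitization ℂ B) = Unitization.starMap f (z : Unitization ℂ A) := rfl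

lemma adU_starMap (f : A →⋆ₙₐ[ℂ] B) (w : unitary (Unitization ℂ B))
    (z : unitary (Unitization ℂ A)) (a : A) :
    adU w (f (adU z a)) = adU (w * uStarMap f z) (f a) := by
  apply Unitization.inr_injective (R := ℂ)
  rw [inr_adU, inr_adU]
  have h2 : (f (adU z a) : Unitization ℂ B)
      = Unitization.starMap f ((adU z a : A) : Unitization ℂ A) :=
    (Unitization.starMap_inr f _).symm
  rw [h2, inr_adU, map_mul, map_mul, map_star, Unitization.starMap_inr]
  rw [← coe_uStarMap f z]
  push_cast [star_mul]
  simp [mul_assoc]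

lemma exists_adU (φ : A →⋆ₙₐ[ℂ] B) (ψ : B →⋆ₙₐ[ℂ] A)
    (h : ApproxUnitarilyEquiv (⇑φ ∘ ⇑ψ) (id : B → B))
    (z : unitary (Unitization ℂ A)) (Y : Finset B) {ε : ℝ} (hε : 0 < ε) :
    ∃ w : unitary (Unitization ℂ B), ∀ y ∈ Y, ‖adU w (φ (adU z (ψ y))) - y‖ ≤ ε := by
  obtain ⟨u, hu⟩ := h
  have hu' : ∀ y : B, Tendsto (fun n => ‖adU (u n) (φ (ψ y)) - y‖) atTop (𝓝 0) := by
    intro y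
    have key : ∀ n, ‖(u n : Unitization ℂ B) * (((⇑φ ∘ ⇑ψ) y : B) : Unitization ℂ B)
        * star (u n : Unitization ℂ B) - ((id y : B) : Unitization ℂ B)‖
        = ‖adU (u n) (φ (ψ y)) - y‖ := by
      intro n
      rw [← inr_adU, ← Unitization.inr_sub ℂ, Unitization.norm_inr]
      rfl
    simpa only [key] using hu y
  have hev : ∀ᶠ n in atTop, ∀ y ∈ Y, ‖adU (u n) (φ (ψ y)) - y‖ ≤ ε := by
    rw [eventually_all_finset]
    exact fun y _ => (hu' y).eventually (eventually_le_nhds hε)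
  obtain ⟨n, hn⟩ := hev.exists
  refine ⟨u n * (uStarMap φ z)⁻¹, fun y hy => ?_⟩
  rw [adU_starMap, inv_mul_cancel_right]
  exact hn y hy

/-- Pointwise limit of non-unital star homomorphisms, bundled. -/
noncomputable def limHom (g : ℕ → A →⋆ₙₐ[ℂ] B) (f : A → B)
    (h : ∀ a, Tendsto (fun k => g k a) atTop (𝓝 (f a))) : A →⋆ₙₐ[ℂ] B where
  toFun := f
  map_smul' c a := tendsto_nhds_unique (h (c • a))
    (by simpa using (h a).const_smul c)
  map_zero' := tendsto_nhds_unique (h 0) (by simpa using tendsto_const_nhds)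
  map_add' a b := tendsto_nhds_unique (h (a + b)) (by simpa using (h a).add (h b))
  map_mul' a b := tendsto_nhds_unique (h (a * b)) (by simpa using (h a).mul (h b))
  map_star' a := tendsto_nhds_unique (h (star a))
    (by simp only [map_star]; exact (h a).star)


lemma cauchySeq_of_eventually_geom {E : Type*} [NormedAddCommGroup E] (v : ℕ → E) (M : ℝ) (m : ℕ)
    (hM : ∀ k, ‖v (k+1) - v k‖ ≤ M)
    (hg : ∀ k, m ≤ k → ‖v (k+1) - v k‖ ≤ 2 * (1/2 : ℝ)^k) : CauchySeq v := by
  have hM0 : 0 ≤ M := le_trans (norm_nonneg _) (hM 0)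
  apply cauchySeq_of_le_geometric (1/2) (2 + M * 2^m) (by norm_num)
  intro k
  rw [dist_eq_norm, norm_sub_rev]
  have hpow : (0:ℝ) < (1/2 : ℝ)^k := by positivity
  have hC : (0:ℝ) ≤ M * 2^m := by positivity
  rcases le_or_gt m k with h | h
  · calc ‖v (k+1) - v k‖ ≤ 2*(1/2 : ℝ)^k := hg k h
      _ ≤ (2 + M*2^m)*(1/2 : ℝ)^k := mul_le_mul_of_nonneg_right (by linarith) hpow.le
  · have h2 : (1:ℝ) ≤ 2^m * (1/2 : ℝ)^k := by
      have hle : (2:ℝ)^k ≤ 2^m := pow_le_pow_right₀ (by norm_num) h.le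
      rw [one_div, inv_pow, ← div_eq_mul_inv, le_div_iff₀ (by positivity)]
      simpa using hle
    calc ‖v (k+1) - v k‖ ≤ M := hM k
      _ = M * 1 := (mul_one M).symm
      _ ≤ M * (2^m * (1/2 : ℝ)^k) := mul_le_mul_of_nonneg_left h2 hM0
      _ = (M * 2^m) * (1/2 : ℝ)^k := by ring
      _ ≤ (2 + M*2^m)*(1/2 : ℝ)^k := mul_le_mul_of_nonneg_right (by linarith) hpow.le

end ElliottAux

open ElliottAux TopologicalSpace

/-- Elliott's two-sided intertwining: if `ψ ∘ φ ≈_u id_A` and `φ ∘ ψ ≈_u id_B` for separable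
C*-algebras `A`, `B`, then `A ≅ B`; moreover `φ` is approximately unitarily equivalent to an
isomorphism. -/
theorem elliott_intertwining {A B : Type*}
    [NonUnitalCStarAlgebra A] [NonUnitalCStarAlgebra B]
    [TopologicalSpace.SeparableSpace A] [TopologicalSpace.SeparableSpace B]
    (φ : A →⋆ₙₐ[ℂ] B) (ψ : B →⋆ₙₐ[ℂ] A)
    (h₁ : ApproxUnitarilyEquiv (⇑ψ ∘ ⇑φ) (id : A → A))
    (h₂ : ApproxUnitarilyEquiv (⇑φ ∘ ⇑ψ) (id : B → B)) :
    ∃ e : A ≃⋆ₐ[ℂ] B, ApproxUnitarilyEquiv ⇑φ ⇑e := by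
  haveI : Nonempty A := ⟨0⟩
  haveI : Nonempty B := ⟨0⟩
  set dA : ℕ → A := denseSeq A with hdA
  set dB : ℕ → B := denseSeq B with hdB
  -- one step of the intertwining construction
  have step : ∀ (k : ℕ) (p : unitary (Unitization ℂ B) × unitary (Unitization ℂ A)),
      ∃ q : unitary (Unitization ℂ B) × unitary (Unitization ℂ A),
        (∀ i ≤ k, ‖adU q.1 (φ (adU p.2 (ψ (dB i)))) - dB i‖ ≤ (1/2 : ℝ)^k
          ∧ ‖adU q.1 (φ (adU p.2 (ψ (adU p.1 (φ (dA i)))))) - adU p.1 (φ (dA i))‖ ≤ (1/2 : ℝ)^k)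
        ∧ (∀ i ≤ k+1, ‖adU q.2 (ψ (adU q.1 (φ (dA i)))) - dA i‖ ≤ (1/2 : ℝ)^(k+1))
        ∧ (∀ i ≤ k, ‖adU q.2 (ψ (adU q.1 (φ (adU p.2 (ψ (dB i)))))) - adU p.2 (ψ (dB i))‖
            ≤ (1/2 : ℝ)^(k+1)) := by
    intro k p
    classical
    obtain ⟨w, hw⟩ := exists_adU φ ψ h₂ p.2
      ((Finset.range (k+1)).image dB ∪ (Finset.range (k+1)).image (fun i => adU p.1 (φ (dA i))))
      (ε := (1/2 : ℝ)^k) (by positivity)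
    obtain ⟨z, hz⟩ := exists_adU ψ φ h₁ w
      ((Finset.range (k+2)).image dA ∪ (Finset.range (k+1)).image (fun i => adU p.2 (ψ (dB i))))
      (ε := (1/2 : ℝ)^(k+1)) (by positivity)
    refine ⟨(w, z), fun i hi => ⟨hw _ ?_, hw _ ?_⟩, fun i hi => hz _ ?_, fun i hi => hz _ ?_⟩
    · exact Finset.mem_union_left _ (Finset.mem_image.2 ⟨i, Finset.mem_range.2 (by omega), rfl⟩)
    · exact Finset.mem_union_right _ (Finset.mem_image.2 ⟨i, Finset.mem_range.2 (by omega), rfl⟩)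
    · exact Finset.mem_union_left _ (Finset.mem_image.2 ⟨i, Finset.mem_range.2 (by omega), rfl⟩)
    · exact Finset.mem_union_right _ (Finset.mem_image.2 ⟨i, Finset.mem_range.2 (by omega), rfl⟩)
  choose f hf using step
  -- the recursively constructed sequences of unitaries
  set c : ℕ → unitary (Unitization ℂ B) × unitary (Unitization ℂ A) :=
    fun n => Nat.rec (1, 1) (fun k ih => f k ih) n with hc
  set Fφ : ℕ → (A →⋆ₙₐ[ℂ] B) := fun k => (adU (c k).1).comp φ with hFφ
  set Fψ : ℕ → (B →⋆ₙₐ[ℂ] A) := fun k => (adU (c k).2).comp ψ with hFψ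
  have HQ : ∀ k, ∀ i ≤ k, ‖Fφ (k+1) (Fψ k (dB i)) - dB i‖ ≤ (1/2 : ℝ)^k :=
    fun k i hi => ((hf k (c k)).1 i hi).1
  have HQ' : ∀ k, ∀ i ≤ k, ‖Fφ (k+1) (Fψ k (Fφ k (dA i))) - Fφ k (dA i)‖ ≤ (1/2 : ℝ)^k :=
    fun k i hi => ((hf k (c k)).1 i hi).2
  have HP : ∀ k, ∀ i ≤ k+1, ‖Fψ (k+1) (Fφ (k+1) (dA i)) - dA i‖ ≤ (1/2 : ℝ)^(k+1) :=
    fun k i hi => (hf k (c k)).2.1 i hi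
  have HP' : ∀ k, ∀ i ≤ k, ‖Fψ (k+1) (Fφ (k+1) (Fψ k (dB i))) - Fψ k (dB i)‖ ≤ (1/2 : ℝ)^(k+1) :=
    fun k i hi => (hf k (c k)).2.2 i hi
  -- successive difference bounds on the dense sequences
  have diffφ : ∀ i k, 1 ≤ k → i ≤ k →
      ‖Fφ (k+1) (dA i) - Fφ k (dA i)‖ ≤ 2 * (1/2 : ℝ)^k := by
    intro i k hk1 hik
    have e1 : ‖dA i - Fψ k (Fφ k (dA i))‖ ≤ (1/2 : ℝ)^k := by
      obtain ⟨k', rfl⟩ : ∃ k', k = k' + 1 := ⟨k - 1, by omega⟩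
      have := HP k' i (by omega)
      rwa [norm_sub_rev]
    calc ‖Fφ (k+1) (dA i) - Fφ k (dA i)‖
        ≤ ‖Fφ (k+1) (dA i) - Fφ (k+1) (Fψ k (Fφ k (dA i)))‖
          + ‖Fφ (k+1) (Fψ k (Fφ k (dA i))) - Fφ k (dA i)‖ := by
          have := dist_triangle (Fφ (k+1) (dA i)) (Fφ (k+1) (Fψ k (Fφ k (dA i)))) (Fφ k (dA i))
          simpa [dist_eq_norm] using this
      _ ≤ (1/2 : ℝ)^k + (1/2 : ℝ)^k := by
          refine add_le_add ?_ (HQ' k i hik)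
          rw [← map_sub]
          exact (NonUnitalStarAlgHom.norm_apply_le _ _).trans e1
      _ = 2 * (1/2 : ℝ)^k := by ring
  have diffψ : ∀ i k, i ≤ k →
      ‖Fψ (k+1) (dB i) - Fψ k (dB i)‖ ≤ 2 * (1/2 : ℝ)^k := by
    intro i k hik
    have e1 : ‖dB i - Fφ (k+1) (Fψ k (dB i))‖ ≤ (1/2 : ℝ)^k := by
      have := HQ k i hik
      rwa [norm_sub_rev]
    calc ‖Fψ (k+1) (dB i) - Fψ k (dB i)‖
        ≤ ‖Fψ (k+1) (dB i) - Fψ (k+1) (Fφ (k+1) (Fψ k (dB i)))‖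
          + ‖Fψ (k+1) (Fφ (k+1) (Fψ k (dB i))) - Fψ k (dB i)‖ := by
          have := dist_triangle (Fψ (k+1) (dB i)) (Fψ (k+1) (Fφ (k+1) (Fψ k (dB i)))) (Fψ k (dB i))
          simpa [dist_eq_norm] using this
      _ ≤ (1/2 : ℝ)^k + (1/2 : ℝ)^(k+1) := by
          refine add_le_add ?_ (HP' k i hik)
          rw [← map_sub]
          exact (NonUnitalStarAlgHom.norm_apply_le _ _).trans e1
      _ ≤ 2 * (1/2 : ℝ)^k := by
          have h1 : (1/2 : ℝ)^(k+1) ≤ (1/2 : ℝ)^k :=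
            pow_le_pow_of_le_one (by norm_num) (by norm_num) (by omega)
          linarith
  -- Cauchy on the dense sequences
  have cauφ0 : ∀ i, CauchySeq (fun k => Fφ k (dA i)) := by
    intro i
    refine cauchySeq_of_eventually_geom _ (2 * ‖dA i‖) (i+1) (fun k => ?_)
      (fun k hk => diffφ i k (by omega) (by omega))
    calc ‖Fφ (k+1) (dA i) - Fφ k (dA i)‖ ≤ ‖Fφ (k+1) (dA i)‖ + ‖Fφ k (dA i)‖ :=
          norm_sub_le _ _
      _ ≤ ‖dA i‖ + ‖dA i‖ := add_le_add (NonUnitalStarAlgHom.norm_apply_le _ _)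
          (NonUnitalStarAlgHom.norm_apply_le _ _)
      _ = 2 * ‖dA i‖ := by ring
  have cauψ0 : ∀ i, CauchySeq (fun k => Fψ k (dB i)) := by
    intro i
    refine cauchySeq_of_eventually_geom _ (2 * ‖dB i‖) i (fun k => ?_)
      (fun k hk => diffψ i k hk)
    calc ‖Fψ (k+1) (dB i) - Fψ k (dB i)‖ ≤ ‖Fψ (k+1) (dB i)‖ + ‖Fψ k (dB i)‖ :=
          norm_sub_le _ _
      _ ≤ ‖dB i‖ + ‖dB i‖ := add_le_add (NonUnitalStarAlgHom.norm_apply_le _ _)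
          (NonUnitalStarAlgHom.norm_apply_le _ _)
      _ = 2 * ‖dB i‖ := by ring
  -- Cauchy everywhere, by density and contractivity
  have cauφ : ∀ a : A, CauchySeq (fun k => Fφ k a) := by
    intro a
    rw [Metric.cauchySeq_iff]
    intro ε hε
    obtain ⟨i, hi⟩ := (denseRange_denseSeq A).exists_dist_lt a (show (0:ℝ) < ε/3 by linarith)
    obtain ⟨N, hN⟩ := Metric.cauchySeq_iff.mp (cauφ0 i) (ε/3) (by linarith)
    refine ⟨N, fun m hm n hn => ?_⟩
    have bound : ∀ k, dist (Fφ k a) (Fφ k (dA i)) ≤ ε/3 := by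
      intro k
      rw [dist_eq_norm, ← map_sub]
      refine (NonUnitalStarAlgHom.norm_apply_le _ _).trans ?_
      rw [← dist_eq_norm]
      exact hi.le
    have := dist_triangle4 (Fφ m a) (Fφ m (dA i)) (Fφ n (dA i)) (Fφ n a)
    have h1 := bound m
    have h2 := hN m hm n hn
    have h3 := bound n
    rw [dist_comm (Fφ n (dA i)) (Fφ n a)] at this
    linarith
  have cauψ : ∀ b : B, CauchySeq (fun k => Fψ k b) := by
    intro b
    rw [Metric.cauchySeq_iff]
    intro ε hε
    obtain ⟨i, hi⟩ := (denseRange_denseSeq B).exists_dist_lt b (show (0:ℝ) < ε/3 by linarith)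
    obtain ⟨N, hN⟩ := Metric.cauchySeq_iff.mp (cauψ0 i) (ε/3) (by linarith)
    refine ⟨N, fun m hm n hn => ?_⟩
    have bound : ∀ k, dist (Fψ k b) (Fψ k (dB i)) ≤ ε/3 := by
      intro k
      rw [dist_eq_norm, ← map_sub]
      refine (NonUnitalStarAlgHom.norm_apply_le _ _).trans ?_
      rw [← dist_eq_norm]
      exact hi.le
    have := dist_triangle4 (Fψ m b) (Fψ m (dB i)) (Fψ n (dB i)) (Fψ n b)
    have h1 := bound m
    have h2 := hN m hm n hn
    have h3 := bound n
    rw [dist_comm (Fψ n (dB i)) (Fψ n b)] at this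
    linarith
  -- the limit maps
  choose Φ0 hΦ using fun a => cauchySeq_tendsto_of_complete (cauφ a)
  choose Ψ0 hΨ using fun b => cauchySeq_tendsto_of_complete (cauψ b)
  let Φ : A →⋆ₙₐ[ℂ] B := limHom Fφ Φ0 hΦ
  let Ψ : B →⋆ₙₐ[ℂ] A := limHom Fψ Ψ0 hΨ
  have contΦ : Continuous Φ0 := by
    have : Continuous Φ := AddMonoidHomClass.continuous_of_bound Φ 1
      (fun a => by simpa using NonUnitalStarAlgHom.norm_apply_le Φ a)
    exact this
  have contΨ : Continuous Ψ0 := by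
    have : Continuous Ψ := AddMonoidHomClass.continuous_of_bound Ψ 1
      (fun b => by simpa using NonUnitalStarAlgHom.norm_apply_le Ψ b)
    exact this
  -- the compositions converge pointwise to the composed limits
  have keyΨΦ : ∀ a, Tendsto (fun k => Fψ (k+1) (Fφ (k+1) a)) atTop (𝓝 (Ψ0 (Φ0 a))) := by
    intro a
    have t0 := (hΨ (Φ0 a)).comp (tendsto_add_atTop_nat 1)
    have t1 : Tendsto (fun k => Fψ (k+1) (Φ0 a)) atTop (𝓝 (Ψ0 (Φ0 a))) := t0
    refine t1.congr_dist ?_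
    have hb : ∀ k, dist (Fψ (k+1) (Φ0 a)) (Fψ (k+1) (Fφ (k+1) a)) ≤ dist (Φ0 a) (Fφ (k+1) a) := by
      intro k
      rw [dist_eq_norm, dist_eq_norm, ← map_sub]
      exact NonUnitalStarAlgHom.norm_apply_le _ _
    have hd : Tendsto (fun k => dist (Φ0 a) (Fφ (k+1) a)) atTop (𝓝 0) := by
      have h'0 := (hΦ a).comp (tendsto_add_atTop_nat 1)
      have h' : Tendsto (fun k => Fφ (k+1) a) atTop (𝓝 (Φ0 a)) := h'0
      have := tendsto_iff_dist_tendsto_zero.mp h'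
      simpa [dist_comm] using this
    exact squeeze_zero (fun k => dist_nonneg) hb hd
  have keyΦΨ : ∀ b, Tendsto (fun k => Fφ (k+1) (Fψ k b)) atTop (𝓝 (Φ0 (Ψ0 b))) := by
    intro b
    have t0 := (hΦ (Ψ0 b)).comp (tendsto_add_atTop_nat 1)
    have t1 : Tendsto (fun k => Fφ (k+1) (Ψ0 b)) atTop (𝓝 (Φ0 (Ψ0 b))) := t0
    refine t1.congr_dist ?_
    have hb : ∀ k, dist (Fφ (k+1) (Ψ0 b)) (Fφ (k+1) (Fψ k b)) ≤ dist (Ψ0 b) (Fψ k b) := by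
      intro k
      rw [dist_eq_norm, dist_eq_norm, ← map_sub]
      exact NonUnitalStarAlgHom.norm_apply_le _ _
    have hd : Tendsto (fun k => dist (Ψ0 b) (Fψ k b)) atTop (𝓝 0) := by
      have := tendsto_iff_dist_tendsto_zero.mp (hΨ b)
      simpa [dist_comm] using this
    exact squeeze_zero (fun k => dist_nonneg) hb hd
  -- the limit maps are mutually inverse
  have halfpow : Tendsto (fun k : ℕ => (1/2 : ℝ)^(k+1)) atTop (𝓝 0) := by
    have t0 := ((tendsto_pow_atTop_nhds_zero_of_lt_one
      (show (0:ℝ) ≤ 1/2 by norm_num) (by norm_num))).comp (tendsto_add_atTop_nat 1)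
    exact t0
  have halfpow' : Tendsto (fun k : ℕ => (1/2 : ℝ)^k) atTop (𝓝 0) :=
    tendsto_pow_atTop_nhds_zero_of_lt_one (by norm_num) (by norm_num)
  have idA : ∀ a, Ψ0 (Φ0 a) = a := by
    have hEq : ∀ i, Ψ0 (Φ0 (dA i)) = dA i := by
      intro i
      refine tendsto_nhds_unique (keyΨΦ (dA i)) ?_
      rw [tendsto_iff_dist_tendsto_zero]
      refine squeeze_zero' (Eventually.of_forall fun k => dist_nonneg) ?_ halfpow
      filter_upwards [eventually_ge_atTop i] with k hk
      rw [dist_eq_norm]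
      exact HP k i (by omega)
    have : Set.EqOn (Ψ0 ∘ Φ0) id (Set.range dA) := by
      rintro _ ⟨i, rfl⟩
      exact hEq i
    have := Continuous.ext_on (denseRange_denseSeq A) (contΨ.comp contΦ) continuous_id this
    exact fun a => congrFun this a
  have idB : ∀ b, Φ0 (Ψ0 b) = b := by
    have hEq : ∀ i, Φ0 (Ψ0 (dB i)) = dB i := by
      intro i
      refine tendsto_nhds_unique (keyΦΨ (dB i)) ?_
      rw [tendsto_iff_dist_tendsto_zero]
      refine squeeze_zero' (Eventually.of_forall fun k => dist_nonneg) ?_ halfpow'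
      filter_upwards [eventually_ge_atTop i] with k hk
      rw [dist_eq_norm]
      exact HQ k i hk
    have : Set.EqOn (Φ0 ∘ Ψ0) id (Set.range dB) := by
      rintro _ ⟨i, rfl⟩
      exact hEq i
    have := Continuous.ext_on (denseRange_denseSeq B) (contΦ.comp contΨ) continuous_id this
    exact fun b => congrFun this b
  -- assemble the isomorphism
  let e : A ≃⋆ₐ[ℂ] B :=
    { toFun := Φ0
      invFun := Ψ0
      left_inv := idA
      right_inv := idB
      map_add' := map_add Φ
      map_mul' := map_mul Φ
      map_smul' := map_smul Φ
      map_star' := map_star Φ }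
  refine ⟨e, fun n => (c (n+1)).1, fun a => ?_⟩
  have key : ∀ n, ‖((c (n+1)).1 : Unitization ℂ B) * ((φ a : B) : Unitization ℂ B)
      * star ((c (n+1)).1 : Unitization ℂ B) - ((e a : B) : Unitization ℂ B)‖
      = ‖Fφ (n+1) a - Φ0 a‖ := by
    intro n
    rw [← inr_adU, ← Unitization.inr_sub ℂ, Unitization.norm_inr]
    rfl
  simp only [key]
  have h'0 := (hΦ a).comp (tendsto_add_atTop_nat 1)
  have h' : Tendsto (fun n => Fφ (n+1) a) atTop (𝓝 (Φ0 a)) := h'0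
  have := tendsto_iff_dist_tendsto_zero.mp h'
  simpa [dist_eq_norm] using this
end

section
/- A *-homomorphism approximately unitarily equivalent to id whose square is approximately inner is close to an automorphism: let A be a separable C*-algebra and σ̃ : A → A a *-homomorphism such that σ̃² is approximately unitarily equivalent to id_A. Then σ̃ is approximately unitarily equivalent to an automorphism of A. -/
open Filter Topology

namespace AUEAux

variable {A : Type*} [NonUnitalCStarAlgebra A]

noncomputable section

variable (σ : A →⋆ₙₐ[ℂ] A)

/-- The map `a ↦ w σ(a) w⋆`, viewed as a map `A → A` via the ideal `A ⊴ A†`. -/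
def cj (w : unitary (Unitization ℂ A)) (a : A) : A :=
  ((w : Unitization ℂ A) * (σ a : Unitization ℂ A) * star (w : Unitization ℂ A)).snd

lemma inr_cj (w : unitary (Unitization ℂ A)) (a : A) :
    (↑(cj σ w a) : Unitization ℂ A)
      = (w : Unitization ℂ A) * (σ a : Unitization ℂ A) * star (w : Unitization ℂ A) := by
  refine Unitization.ext ?_ rfl
  simp [Unitization.fst_mul]

lemma cj_add (w : unitary (Unitization ℂ A)) (a b : A) :
    cj σ w (a + b) = cj σ w a + cj σ w b := by
  apply Unitization.inr_injective (R := ℂ)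
  simp only [Unitization.inr_add, inr_cj, map_add, mul_add, add_mul]

lemma cj_sub (w : unitary (Unitization ℂ A)) (a b : A) :
    cj σ w (a - b) = cj σ w a - cj σ w b := by
  apply Unitization.inr_injective (R := ℂ)
  simp only [Unitization.inr_sub, inr_cj, map_sub, mul_sub, sub_mul]

lemma cj_smul (w : unitary (Unitization ℂ A)) (c : ℂ) (a : A) :
    cj σ w (c • a) = c • cj σ w a := by
  apply Unitization.inr_injective (R := ℂ)
  simp only [Unitization.inr_smul, inr_cj, map_smul, smul_mul_assoc, mul_smul_comm]

lemma cj_mul (w : unitary (Unitization ℂ A)) (a b : A) :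
    cj σ w (a * b) = cj σ w a * cj σ w b := by
  apply Unitization.inr_injective (R := ℂ)
  have h1 : star (w : Unitization ℂ A) * (w : Unitization ℂ A) = 1 :=
    Unitary.coe_star_mul_self w
  rw [Unitization.inr_mul, inr_cj, inr_cj, inr_cj, map_mul, Unitization.inr_mul]
  calc (w : Unitization ℂ A) * ((σ a : Unitization ℂ A) * (σ b : Unitization ℂ A))
        * star (w : Unitization ℂ A)
      = (w : Unitization ℂ A) * (σ a : Unitization ℂ A)
        * (star (w : Unitization ℂ A) * (w : Unitization ℂ A))
        * ((σ b : Unitization ℂ A) * star (w : Unitization ℂ A)) := by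
        rw [h1]; simp only [mul_one, mul_assoc]
      _ = (w : Unitization ℂ A) * (σ a : Unitization ℂ A) * star (w : Unitization ℂ A)
          * ((w : Unitization ℂ A) * (σ b : Unitization ℂ A) * star (w : Unitization ℂ A)) := by
        simp only [mul_assoc]

lemma cj_star (w : unitary (Unitization ℂ A)) (a : A) :
    cj σ w (star a) = star (cj σ w a) := by
  apply Unitization.inr_injective (R := ℂ)
  rw [Unitization.inr_star, inr_cj, inr_cj]
  simp only [star_mul, star_star, map_star, Unitization.inr_star, mul_assoc]

lemma norm_cj (w : unitary (Unitization ℂ A)) (a : A) : ‖cj σ w a‖ = ‖σ a‖ := by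
  rw [← Unitization.norm_inr (𝕜 := ℂ), inr_cj, mul_assoc,
    CStarRing.norm_mem_unitary_mul _ w.prop,
    CStarRing.norm_mul_mem_unitary _ (Unitary.star_mem w.prop), Unitization.norm_inr]

lemma cj_lip (w : unitary (Unitization ℂ A)) (a b : A) :
    ‖cj σ w a - cj σ w b‖ ≤ ‖a - b‖ := by
  rw [← cj_sub, norm_cj]
  exact NonUnitalStarAlgHom.norm_apply_le σ (a - b)

lemma conj_helper {M : Type*} [Monoid M] [StarMul M] (p q t : M) (hq : star q * q = 1) :
    (p * star q) * (q * t * star q) * star (p * star q) = p * t * star p := by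
  have hq' : ∀ X : M, star q * (q * X) = X := fun X => by rw [← mul_assoc, hq, one_mul]
  simp only [star_mul, star_star, mul_assoc]
  rw [hq', hq']

lemma key (h : ApproxUnitarilyEquiv (⇑σ ∘ ⇑σ) (id : A → A)) (F : Finset A) (n : ℕ) (w : unitary (Unitization ℂ A)) :
    ∃ v : unitary (Unitization ℂ A),
      ∀ x ∈ F, ‖cj σ v (cj σ w x) - x‖ ≤ (1/2 : ℝ)^n := by
  obtain ⟨u, hu⟩ := h
  have hev : ∀ᶠ m in atTop, ∀ x ∈ F,
      ‖(u m : Unitization ℂ A) * ((σ (σ x) : A) : Unitization ℂ A)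
        * star (u m : Unitization ℂ A) - (x : Unitization ℂ A)‖ ≤ (1/2 : ℝ)^n := by
    rw [eventually_all_finset]
    intro x _
    have hx0 : (0:ℝ) < (1/2 : ℝ)^n := by positivity
    exact (hu x).eventually_le_const hx0
  obtain ⟨m, hm⟩ := hev.exists
  set W : unitary (Unitization ℂ A) := ⟨Unitization.starMap σ (w : Unitization ℂ A), Unitary.map_mem _ w.prop⟩ with hW
  refine ⟨u m * star W, fun x hx => ?_⟩
  have hWc : (W : Unitization ℂ A) = Unitization.starMap σ (w : Unitization ℂ A) := rfl
  have hWs : star (W : Unitization ℂ A) * (W : Unitization ℂ A) = 1 :=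
    Unitary.coe_star_mul_self W
  have hinr : (↑(cj σ (u m * star W) (cj σ w x)) : Unitization ℂ A)
      = (u m : Unitization ℂ A) * ((σ (σ x) : A) : Unitization ℂ A)
        * star (u m : Unitization ℂ A) := by
    rw [inr_cj]
    have hσ : ((σ (cj σ w x) : A) : Unitization ℂ A)
        = (W : Unitization ℂ A) * ((σ (σ x) : A) : Unitization ℂ A)
          * star (W : Unitization ℂ A) := by
      rw [← Unitization.starMap_inr σ (cj σ w x), inr_cj, map_mul, map_mul, map_star,
        Unitization.starMap_inr, hWc]
    have hcoe : ((u m * star W : unitary (Unitization ℂ A)) : Unitization ℂ A)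
        = (u m : Unitization ℂ A) * star (W : Unitization ℂ A) := rfl
    rw [hσ, hcoe]
    exact conj_helper _ _ _ hWs
  have := hm x hx
  rwa [← Unitization.norm_inr (𝕜 := ℂ), Unitization.inr_sub, hinr]

variable (h : ApproxUnitarilyEquiv (⇑σ ∘ ⇑σ) (id : A → A)) [DecidableEq A]

/-- The unitary produced by `key`. -/
def pick (F : Finset A) (n : ℕ) (w : unitary (Unitization ℂ A)) : unitary (Unitization ℂ A) :=
  (key σ h F n w).choose

lemma pick_spec (F : Finset A) (n : ℕ) (w : unitary (Unitization ℂ A)) :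
    ∀ x ∈ F, ‖cj σ (pick σ h F n w) (cj σ w x) - x‖ ≤ (1/2 : ℝ)^n :=
  (key σ h F n w).choose_spec

/-- Data at each stage of the intertwining construction. -/
structure Step (A : Type*) [NonUnitalCStarAlgebra A] where
  w : unitary (Unitization ℂ A)
  v : unitary (Unitization ℂ A)
  F : Finset A
  G : Finset A

variable (d : ℕ → A)

/-- The recursive intertwining construction. -/
def seq : ℕ → Step A
  | 0 =>
    ⟨1, pick σ h {d 0} 0 1, {d 0}, Finset.image (cj σ 1) {d 0} ∪ {d 0}⟩
  | n + 1 =>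
    let p := seq n
    let w := pick σ h p.G n p.v
    let F := p.F ∪ {d (n+1)} ∪ p.G.image (cj σ p.v)
    ⟨w, pick σ h F (n+1) w, F, F.image (cj σ w) ∪ (Finset.range (n+2)).image d⟩

lemma seq_v (n : ℕ) :
    (seq σ h d n).v = pick σ h (seq σ h d n).F n (seq σ h d n).w := by
  cases n <;> rfl

lemma seq_w_succ (n : ℕ) :
    (seq σ h d (n+1)).w = pick σ h (seq σ h d n).G n (seq σ h d n).v := rfl

lemma seq_F_succ (n : ℕ) :
    (seq σ h d (n+1)).F = (seq σ h d n).F ∪ {d (n+1)}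
      ∪ (seq σ h d n).G.image (cj σ (seq σ h d n).v) := rfl

lemma F_subset_succ (n : ℕ) : (seq σ h d n).F ⊆ (seq σ h d (n+1)).F := by
  rw [seq_F_succ]
  exact (Finset.subset_union_left.trans Finset.subset_union_left)

lemma F_mono {n m : ℕ} (hnm : n ≤ m) : (seq σ h d n).F ⊆ (seq σ h d m).F := by
  induction m with
  | zero => simpa [Nat.le_zero.mp hnm] using subset_rfl
  | succ m ih =>
    rcases Nat.lt_or_ge n (m+1) with hl | hg
    · exact (ih (Nat.lt_succ_iff.mp hl)).trans (F_subset_succ σ h d m)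
    · have : n = m + 1 := le_antisymm hnm hg
      subst this; exact subset_rfl

lemma d_mem_F {k n : ℕ} (hkn : k ≤ n) : d k ∈ (seq σ h d n).F := by
  induction n with
  | zero => simp [Nat.le_zero.mp hkn, seq]
  | succ n ih =>
    rcases Nat.lt_or_ge k (n+1) with hl | hg
    · exact F_subset_succ σ h d n (ih (Nat.lt_succ_iff.mp hl))
    · have : k = n + 1 := le_antisymm hkn hg
      subst this
      rw [seq_F_succ]
      exact Finset.mem_union_left _ (Finset.mem_union_right _ (Finset.mem_singleton_self _))

lemma cjw_mem_G {n : ℕ} {x : A} (hx : x ∈ (seq σ h d n).F) :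
    cj σ (seq σ h d n).w x ∈ (seq σ h d n).G := by
  cases n with
  | zero => exact Finset.mem_union_left _ (Finset.mem_image_of_mem _ hx)
  | succ n => exact Finset.mem_union_left _ (Finset.mem_image_of_mem _ hx)

lemma d_mem_G {k n : ℕ} (hkn : k ≤ n) : d k ∈ (seq σ h d n).G := by
  cases n with
  | zero =>
    have : k = 0 := Nat.le_zero.mp hkn
    subst this
    exact Finset.mem_union_right _ (Finset.mem_singleton_self _)
  | succ n =>
    refine Finset.mem_union_right _ ?_
    exact Finset.mem_image_of_mem d (Finset.mem_range.mpr (Nat.lt_succ_of_le hkn))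

lemma cjv_mem_F_succ {n : ℕ} {y : A} (hy : y ∈ (seq σ h d n).G) :
    cj σ (seq σ h d n).v y ∈ (seq σ h d (n+1)).F := by
  rw [seq_F_succ]
  exact Finset.mem_union_right _ (Finset.mem_image_of_mem _ hy)

lemma vspec (n : ℕ) : ∀ x ∈ (seq σ h d n).F,
    ‖cj σ (seq σ h d n).v (cj σ (seq σ h d n).w x) - x‖ ≤ (1/2 : ℝ)^n := by
  rw [seq_v]
  exact pick_spec σ h _ n _

lemma wspec (n : ℕ) : ∀ y ∈ (seq σ h d n).G,
    ‖cj σ (seq σ h d (n+1)).w (cj σ (seq σ h d n).v y) - y‖ ≤ (1/2 : ℝ)^n := by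
  rw [seq_w_succ]
  exact pick_spec σ h _ n _

lemma step_est (n : ℕ) : ∀ x ∈ (seq σ h d n).F,
    ‖cj σ (seq σ h d (n+1)).w x - cj σ (seq σ h d n).w x‖ ≤ 2 * (1/2 : ℝ)^n := by
  intro x hx
  set a := cj σ (seq σ h d n).w x with ha
  have haG : a ∈ (seq σ h d n).G := cjw_mem_G σ h d hx
  have h1 := wspec σ h d n a haG
  have h2 := vspec σ h d n x hx
  set b := cj σ (seq σ h d n).v a with hb
  have h3 : ‖cj σ (seq σ h d (n+1)).w x - cj σ (seq σ h d (n+1)).w b‖ ≤ (1/2 : ℝ)^n := by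
    refine (cj_lip σ _ x b).trans ?_
    rw [norm_sub_rev]
    exact h2
  calc ‖cj σ (seq σ h d (n+1)).w x - a‖
      = ‖(cj σ (seq σ h d (n+1)).w x - cj σ (seq σ h d (n+1)).w b)
          + (cj σ (seq σ h d (n+1)).w b - a)‖ := by rw [sub_add_sub_cancel]
    _ ≤ ‖cj σ (seq σ h d (n+1)).w x - cj σ (seq σ h d (n+1)).w b‖
          + ‖cj σ (seq σ h d (n+1)).w b - a‖ := norm_add_le _ _
    _ ≤ (1/2 : ℝ)^n + (1/2 : ℝ)^n := add_le_add h3 h1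
    _ = 2 * (1/2 : ℝ)^n := by ring

lemma tail_est {n : ℕ} {x : A} (hx : x ∈ (seq σ h d n).F) :
    ∀ m, n ≤ m → ‖cj σ (seq σ h d m).w x - cj σ (seq σ h d n).w x‖
      ≤ 4 * (1/2 : ℝ)^n - 4 * (1/2 : ℝ)^m := by
  intro m hm
  induction m, hm using Nat.le_induction with
  | base => simp
  | succ m hnm ih =>
    have hxm : x ∈ (seq σ h d m).F := F_mono σ h d hnm hx
    calc ‖cj σ (seq σ h d (m+1)).w x - cj σ (seq σ h d n).w x‖
        = ‖(cj σ (seq σ h d (m+1)).w x - cj σ (seq σ h d m).w x)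
            + (cj σ (seq σ h d m).w x - cj σ (seq σ h d n).w x)‖ := by rw [sub_add_sub_cancel]
      _ ≤ ‖cj σ (seq σ h d (m+1)).w x - cj σ (seq σ h d m).w x‖
            + ‖cj σ (seq σ h d m).w x - cj σ (seq σ h d n).w x‖ := norm_add_le _ _
      _ ≤ 2 * (1/2 : ℝ)^m + (4 * (1/2 : ℝ)^n - 4 * (1/2 : ℝ)^m) :=
            add_le_add (step_est σ h d m x hxm) ih
      _ = 4 * (1/2 : ℝ)^n - 4 * (1/2 : ℝ)^(m+1) := by rw [pow_succ]; ring

lemma tail_est' {n : ℕ} {x : A} (hx : x ∈ (seq σ h d n).F) {m : ℕ} (hm : n ≤ m) :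
    ‖cj σ (seq σ h d m).w x - cj σ (seq σ h d n).w x‖ ≤ 4 * (1/2 : ℝ)^n := by
  refine (tail_est σ h d hx m hm).trans ?_
  have : (0:ℝ) ≤ 4 * (1/2 : ℝ)^m := by positivity
  linarith

lemma cauchy (hd : DenseRange d) (a : A) :
    CauchySeq (fun n => cj σ (seq σ h d n).w a) := by
  rw [Metric.cauchySeq_iff]
  intro ε hε
  obtain ⟨k, hk⟩ := hd.exists_dist_lt a (by positivity : (0:ℝ) < ε/8)
  obtain ⟨N₀, hN₀⟩ := exists_pow_lt_of_lt_one (by positivity : (0:ℝ) < ε/64)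
    (by norm_num : (1/2 : ℝ) < 1)
  set N := max k N₀ with hN
  refine ⟨N, fun m hm n hn => ?_⟩
  have hdk : d k ∈ (seq σ h d N).F := d_mem_F σ h d (le_max_left _ _)
  have hpow : (1/2 : ℝ)^N ≤ (1/2 : ℝ)^N₀ :=
    pow_le_pow_of_le_one (by norm_num) (by norm_num) (le_max_right _ _)
  have hεN : 4 * (1/2 : ℝ)^N < ε/8 := by
    have : (1/2 : ℝ)^N < ε/64 := lt_of_le_of_lt hpow hN₀
    linarith
  have key_est : ∀ j, N ≤ j → dist (cj σ (seq σ h d j).w a) (cj σ (seq σ h d N).w a)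
      < ε/2 := by
    intro j hj
    rw [dist_eq_norm]
    have h1 : ‖cj σ (seq σ h d j).w a - cj σ (seq σ h d j).w (d k)‖ ≤ ‖a - d k‖ :=
      cj_lip σ _ a (d k)
    have h2 := tail_est' σ h d hdk hj
    have h3 : ‖cj σ (seq σ h d N).w (d k) - cj σ (seq σ h d N).w a‖ ≤ ‖d k - a‖ :=
      cj_lip σ _ (d k) a
    have hak : ‖a - d k‖ < ε/8 := by rwa [dist_eq_norm] at hk
    have hka : ‖d k - a‖ < ε/8 := by rwa [norm_sub_rev]
    calc ‖cj σ (seq σ h d j).w a - cj σ (seq σ h d N).w a‖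
        = ‖(cj σ (seq σ h d j).w a - cj σ (seq σ h d j).w (d k))
            + ((cj σ (seq σ h d j).w (d k) - cj σ (seq σ h d N).w (d k))
            + (cj σ (seq σ h d N).w (d k) - cj σ (seq σ h d N).w a))‖ := by
          rw [sub_add_sub_cancel, sub_add_sub_cancel]
      _ ≤ ‖cj σ (seq σ h d j).w a - cj σ (seq σ h d j).w (d k)‖
            + (‖cj σ (seq σ h d j).w (d k) - cj σ (seq σ h d N).w (d k)‖
            + ‖cj σ (seq σ h d N).w (d k) - cj σ (seq σ h d N).w a‖) :=
          (norm_add_le _ _).trans (by gcongr; exact norm_add_le _ _)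
      _ < ε/2 := by
          have hb1 := lt_of_le_of_lt h1 hak
          have hb3 := lt_of_le_of_lt h3 hka
          linarith
  have hm' := key_est m hm
  have hn' := key_est n hn
  calc dist (cj σ (seq σ h d m).w a) (cj σ (seq σ h d n).w a)
      ≤ dist (cj σ (seq σ h d m).w a) (cj σ (seq σ h d N).w a)
        + dist (cj σ (seq σ h d N).w a) (cj σ (seq σ h d n).w a) := dist_triangle _ _ _
    _ < ε/2 + ε/2 := by
        rw [dist_comm (cj σ (seq σ h d N).w a)]
        exact add_lt_add hm' hn'
    _ = ε := by ring

/-- The limit map `θ`. -/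
def limA (hd : DenseRange d) (a : A) : A :=
  (cauchySeq_tendsto_of_complete (cauchy σ h d hd a)).choose

lemma limA_tendsto (hd : DenseRange d) (a : A) :
    Tendsto (fun n => cj σ (seq σ h d n).w a) atTop (𝓝 (limA σ h d hd a)) :=
  (cauchySeq_tendsto_of_complete (cauchy σ h d hd a)).choose_spec

end

end AUEAux

/-- If `σ̃ : A → A` is a *-homomorphism of a separable C*-algebra whose square is approximately
inner (approximately unitarily equivalent to `id_A`), then `σ̃` is approximately unitarily
equivalent to an automorphism of `A`. -/
theorem approx_inner_square_implies_close_to_automorphism {A : Type*}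
    [NonUnitalCStarAlgebra A] [TopologicalSpace.SeparableSpace A]
    (σ : A →⋆ₙₐ[ℂ] A)
    (h : ApproxUnitarilyEquiv (⇑σ ∘ ⇑σ) (id : A → A)) :
    ∃ e : A ≃⋆ₐ[ℂ] A, ApproxUnitarilyEquiv ⇑σ ⇑e := by
  classical
  haveI : DecidableEq A := Classical.decEq A
  haveI : Nonempty A := ⟨0⟩
  obtain ⟨d, hd⟩ := TopologicalSpace.exists_dense_seq A
  open AUEAux in
  -- notation
  set θ : A → A := AUEAux.limA σ h d hd with hθdef
  have hθt : ∀ a, Tendsto (fun n => AUEAux.cj σ (AUEAux.seq σ h d n).w a) atTop (𝓝 (θ a)) :=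
    fun a => AUEAux.limA_tendsto σ h d hd a
  -- σ is isometric
  have hσiso : ∀ a : A, ‖σ a‖ = ‖a‖ := by
    have hσσ : ∀ a : A, ‖σ (σ a)‖ = ‖a‖ := by
      intro a
      obtain ⟨u, hu⟩ := h
      have ht := hu a
      have hconst : ∀ n, ‖(u n : Unitization ℂ A) * ((σ (σ a) : A) : Unitization ℂ A)
          * star (u n : Unitization ℂ A)‖ = ‖σ (σ a)‖ := by
        intro n
        rw [mul_assoc, CStarRing.norm_mem_unitary_mul _ (u n).prop,
          CStarRing.norm_mul_mem_unitary _ (Unitary.star_mem (u n).prop),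
          Unitization.norm_inr]
      have habs : ∀ n, |‖σ (σ a)‖ - ‖a‖| ≤
          ‖(u n : Unitization ℂ A) * ((σ (σ a) : A) : Unitization ℂ A)
            * star (u n : Unitization ℂ A) - ((a : A) : Unitization ℂ A)‖ := by
        intro n
        have := abs_norm_sub_norm_le
          ((u n : Unitization ℂ A) * ((σ (σ a) : A) : Unitization ℂ A)
            * star (u n : Unitization ℂ A)) ((a : A) : Unitization ℂ A)
        rwa [hconst n, Unitization.norm_inr] at this
      have : Tendsto (fun _ : ℕ => |‖σ (σ a)‖ - ‖a‖|) atTop (𝓝 0) := by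
        refine squeeze_zero (fun n => abs_nonneg _) habs ?_
        exact ht
      have h0 : |‖σ (σ a)‖ - ‖a‖| = 0 := tendsto_nhds_unique tendsto_const_nhds this
      have := abs_eq_zero.mp h0
      linarith [sub_eq_zero.mp this]
    intro a
    refine le_antisymm (NonUnitalStarAlgHom.norm_apply_le σ a) ?_
    calc ‖a‖ = ‖σ (σ a)‖ := (hσσ a).symm
      _ ≤ ‖σ a‖ := NonUnitalStarAlgHom.norm_apply_le σ (σ a)
  -- norm preservation for cj and θ
  have hcjnorm : ∀ (n : ℕ) (a : A), ‖AUEAux.cj σ (AUEAux.seq σ h d n).w a‖ = ‖a‖ := by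
    intro n a
    rw [AUEAux.norm_cj, hσiso]
  have hθnorm : ∀ a, ‖θ a‖ = ‖a‖ := by
    intro a
    have h1 : Tendsto (fun n => ‖AUEAux.cj σ (AUEAux.seq σ h d n).w a‖) atTop (𝓝 ‖θ a‖) :=
      (hθt a).norm
    have h2 : Tendsto (fun _ : ℕ => ‖a‖) atTop (𝓝 ‖a‖) := tendsto_const_nhds
    refine tendsto_nhds_unique ?_ h2
    simpa only [hcjnorm] using h1
  -- algebraic properties of θ
  have hadd : ∀ a b, θ (a + b) = θ a + θ b := by
    intro a b
    refine tendsto_nhds_unique ?_ ((hθt a).add (hθt b))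
    simpa only [AUEAux.cj_add] using hθt (a + b)
  have hmul : ∀ a b, θ (a * b) = θ a * θ b := by
    intro a b
    refine tendsto_nhds_unique ?_ ((hθt a).mul (hθt b))
    simpa only [AUEAux.cj_mul] using hθt (a * b)
  have hsmul : ∀ (c : ℂ) a, θ (c • a) = c • θ a := by
    intro c a
    refine tendsto_nhds_unique ?_ ((hθt a).const_smul c)
    simpa only [AUEAux.cj_smul] using hθt (c • a)
  have hstar : ∀ a, θ (star a) = star (θ a) := by
    intro a
    refine tendsto_nhds_unique ?_ ((hθt a).star)
    simpa only [AUEAux.cj_star] using hθt (star a)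
  have hsub : ∀ a b, θ (a - b) = θ a - θ b := by
    intro a b
    refine tendsto_nhds_unique ?_ ((hθt a).sub (hθt b))
    simpa only [AUEAux.cj_sub] using hθt (a - b)
  -- θ is an isometry
  have hθisom : Isometry θ := by
    refine Isometry.of_dist_eq fun a b => ?_
    rw [dist_eq_norm, dist_eq_norm, ← hsub, hθnorm]
  have hinj : Function.Injective θ := hθisom.injective
  -- surjectivity
  have hclosed : IsClosed (Set.range θ) := hθisom.isClosedEmbedding.isClosed_range
  have hdmem : ∀ k, d k ∈ closure (Set.range θ) := by
    intro k
    rw [Metric.mem_closure_iff]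
    intro ε hε
    obtain ⟨n, hn1, hn2⟩ : ∃ n, k ≤ n ∧ 4 * (1/2 : ℝ)^n < ε/4 := by
      obtain ⟨N₀, hN₀⟩ := exists_pow_lt_of_lt_one (by positivity : (0:ℝ) < ε/16)
        (by norm_num : (1/2 : ℝ) < 1)
      refine ⟨max k N₀, le_max_left _ _, ?_⟩
      have : (1/2 : ℝ)^(max k N₀) ≤ (1/2 : ℝ)^N₀ :=
        pow_le_pow_of_le_one (by norm_num) (by norm_num) (le_max_right _ _)
      nlinarith
    set x := AUEAux.cj σ (AUEAux.seq σ h d n).v (d k) with hx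
    have hdkG : d k ∈ (AUEAux.seq σ h d n).G := AUEAux.d_mem_G σ h d hn1
    have hxF : x ∈ (AUEAux.seq σ h d (n+1)).F := AUEAux.cjv_mem_F_succ σ h d hdkG
    have hw : ‖AUEAux.cj σ (AUEAux.seq σ h d (n+1)).w x - d k‖ ≤ (1/2 : ℝ)^n :=
      AUEAux.wspec σ h d n (d k) hdkG
    -- ‖θ x - cj w_{n+1} x‖ ≤ 4 (1/2)^{n+1}
    have hlim : ‖θ x - AUEAux.cj σ (AUEAux.seq σ h d (n+1)).w x‖ ≤ 4 * (1/2 : ℝ)^(n+1) := by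
      have hev : ∀ m, n+1 ≤ m →
          ‖AUEAux.cj σ (AUEAux.seq σ h d m).w x - AUEAux.cj σ (AUEAux.seq σ h d (n+1)).w x‖
            ≤ 4 * (1/2 : ℝ)^(n+1) := fun m hm => AUEAux.tail_est' σ h d hxF hm
      have htnorm : Tendsto (fun m =>
          ‖AUEAux.cj σ (AUEAux.seq σ h d m).w x - AUEAux.cj σ (AUEAux.seq σ h d (n+1)).w x‖)
          atTop (𝓝 ‖θ x - AUEAux.cj σ (AUEAux.seq σ h d (n+1)).w x‖) :=
        ((hθt x).sub tendsto_const_nhds).norm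
      refine le_of_tendsto htnorm ?_
      filter_upwards [eventually_ge_atTop (n+1)] with m hm using hev m hm
    refine ⟨θ x, Set.mem_range_self x, ?_⟩
    rw [dist_comm, dist_eq_norm]
    calc ‖θ x - d k‖
        = ‖(θ x - AUEAux.cj σ (AUEAux.seq σ h d (n+1)).w x)
            + (AUEAux.cj σ (AUEAux.seq σ h d (n+1)).w x - d k)‖ := by rw [sub_add_sub_cancel]
      _ ≤ ‖θ x - AUEAux.cj σ (AUEAux.seq σ h d (n+1)).w x‖
            + ‖AUEAux.cj σ (AUEAux.seq σ h d (n+1)).w x - d k‖ := norm_add_le _ _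
      _ ≤ 4 * (1/2 : ℝ)^(n+1) + (1/2 : ℝ)^n := add_le_add hlim hw
      _ < ε := by
          have h1 : (1/2 : ℝ)^(n+1) ≤ (1/2 : ℝ)^n :=
            pow_le_pow_of_le_one (by norm_num) (by norm_num) (Nat.le_succ n)
          nlinarith [pow_pos (by norm_num : (0:ℝ) < 1/2) n]
  have hsurj : Function.Surjective θ := by
    intro y
    have h1 : closure (Set.range d) ⊆ closure (Set.range θ) := by
      refine closure_minimal ?_ isClosed_closure
      rintro _ ⟨k, rfl⟩
      exact hdmem k
    have h2 : (Set.range θ) = Set.univ := by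
      apply Set.eq_univ_of_univ_subset
      calc Set.univ = closure (Set.range d) := (hd.closure_range).symm
        _ ⊆ closure (Set.range θ) := h1
        _ = Set.range θ := hclosed.closure_eq
    have : y ∈ Set.range θ := h2 ▸ Set.mem_univ y
    exact this
  -- build the automorphism
  refine ⟨{ toFun := θ
            invFun := Function.surjInv hsurj
            left_inv := Function.leftInverse_surjInv ⟨hinj, hsurj⟩
            right_inv := Function.rightInverse_surjInv hsurj
            map_mul' := hmul
            map_add' := hadd
            map_star' := hstar
            map_smul' := hsmul }, ?_⟩
  refine ⟨fun n => (AUEAux.seq σ h d n).w, fun a => ?_⟩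
  have hrw : ∀ n : ℕ, ((AUEAux.seq σ h d n).w : Unitization ℂ A) * ((σ a : A) : Unitization ℂ A)
      * star ((AUEAux.seq σ h d n).w : Unitization ℂ A)
      = ((AUEAux.cj σ (AUEAux.seq σ h d n).w a : A) : Unitization ℂ A) :=
    fun n => (AUEAux.inr_cj σ _ a).symm
  have : Tendsto (fun n => ‖AUEAux.cj σ (AUEAux.seq σ h d n).w a - θ a‖) atTop (𝓝 0) := by
    rw [← tendsto_iff_norm_sub_tendsto_zero]
    exact hθt a
  refine Tendsto.congr' ?_ this
  filter_upwards with n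
  rw [hrw n, ← Unitization.inr_sub]
  rw [Unitization.norm_inr]
  rfl
end
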